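/- Let d ≥ 1 be an integer and let s be a real number with d−2 < s < d and s ≠ 0. Then for every integer k ≥ 0, all the denominators 2n−2k+s−d (n ≥ 0) are nonzero, the series below converges absolutely, and ∑_{n=0}^∞ [Γ(s/2+n) · Γ((s−d)/2+n+1) / (Γ(d/2+n) · n!)] · (1/(2n+2k+d) + 1/(2n−2k+s−d)) = 0. -/

import Mathlib

open Real

open Filter Finset Topology

noncomputable def uu (s : ℝ) (d : ℕ) (n : ℕ) : ℝ :=
  Real.Gamma (s / 2 + n) * Real.Gamma ((s - d) / 2 + n + 1) /
    (Real.Gamma ((d : ℝ) / 2 + n) * (n.factorial : ℝ))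

noncomputable def ff (s : ℝ) (d k : ℕ) (n : ℕ) : ℝ :=
  uu s d n * (1 / (2 * (n : ℝ) + 2 * (k : ℝ) + d) + 1 / (2 * (n : ℝ) - 2 * (k : ℝ) + s - d))

noncomputable def TT (s : ℝ) (d : ℕ) (n : ℕ) : ℝ :=
  uu s d n * n / ((s - d) * ((n : ℝ) + (s - d) / 2))

noncomputable def GG (s : ℝ) (d k : ℕ) (n : ℕ) : ℝ :=
  uu s d n * n * ((n : ℝ) + d / 2 - 1) * ((d : ℝ) + 2 * k + 1 - s / 2) /
    (2 * ((n : ℝ) + d / 2 + k) * ((n : ℝ) + (s - d) / 2 - 1 - k))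

lemma key_ne {d : ℕ} {s : ℝ} (h1 : (d : ℝ) - 2 < s) (h2 : s < d) (m : ℤ) :
    (m : ℝ) + (s - d) / 2 ≠ 0 := by
  intro hm
  have h0 : (0 : ℝ) < m := by linarith
  have h1' : (m : ℝ) < 1 := by linarith
  have e0 : (0 : ℤ) < m := by exact_mod_cast h0
  have e1 : m < 1 := by exact_mod_cast h1'
  omega

lemma u_rec {d : ℕ} (hd : 1 ≤ d) {s : ℝ} (h1 : (d : ℝ) - 2 < s) (hs : s ≠ 0) (n : ℕ) :
    uu s d (n + 1) = uu s d n * (((n : ℝ) + s / 2) * ((n : ℝ) + (s - d) / 2 + 1)) /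
      (((n : ℝ) + (d : ℝ) / 2) * ((n : ℝ) + 1)) := by
  have hd1 : (1 : ℝ) ≤ d := by exact_mod_cast hd
  have hA : s / 2 + (n : ℝ) ≠ 0 := by
    cases n with
    | zero => simpa using (fun h => hs (by linarith))
    | succ m =>
        have : (0 : ℝ) ≤ m := Nat.cast_nonneg m
        push_cast
        intro h; nlinarith
  have hB : (0 : ℝ) < (s - d) / 2 + n + 1 := by
    have : (0 : ℝ) ≤ n := Nat.cast_nonneg n
    linarith
  have hC : (0 : ℝ) < (d : ℝ) / 2 + n := by
    have : (0 : ℝ) ≤ n := Nat.cast_nonneg n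
    linarith
  have hCg : Real.Gamma ((d : ℝ) / 2 + n) ≠ 0 := (Real.Gamma_pos_of_pos hC).ne'
  have hfac : ((n.factorial : ℝ)) ≠ 0 := by exact_mod_cast n.factorial_ne_zero
  have hn1 : ((n : ℝ) + 1) ≠ 0 := by positivity
  have hCne : ((n : ℝ) + (d : ℝ) / 2) ≠ 0 := by intro h; nlinarith [Nat.cast_nonneg (α := ℝ) n]
  unfold uu
  rw [Nat.factorial_succ]
  push_cast
  rw [show s / 2 + ((n : ℝ) + 1) = (s / 2 + n) + 1 by ring,
    Real.Gamma_add_one (by simpa [add_comm] using hA),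
    show (s - d) / 2 + ((n : ℝ) + 1) + 1 = ((s - d) / 2 + n + 1) + 1 by ring,
    Real.Gamma_add_one hB.ne',
    show (d : ℝ) / 2 + ((n : ℝ) + 1) = ((d : ℝ) / 2 + n) + 1 by ring,
    Real.Gamma_add_one hC.ne']
  field_simp
  ring

lemma algB (U x c e : ℝ) (h1 : x + 1 ≠ 0) (h2 : x + c ≠ 0) (h3 : x + e ≠ 0)
    (h4 : x + 1 + e ≠ 0) (h5 : e ≠ 0) :
    U * (1 / (2 * (x + c)) + 1 / (2 * (x + e))) =
      U * ((x + c + e) * (x + e + 1)) / ((x + c) * (x + 1)) * (x + 1) / (2 * e * (x + 1 + e)) -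
        U * x / (2 * e * (x + e)) := by
  field_simp
  ring

lemma algZ (U x c e K : ℝ) (h1 : x + 1 ≠ 0) (h2 : x + c ≠ 0)
    (d1 : x + c + K ≠ 0) (d2 : x + e - K ≠ 0) (d3 : x + c + K + 1 ≠ 0)
    (d4 : x + e - K - 1 ≠ 0) (d5 : x + e - 1 - K ≠ 0) (d6 : x + 1 + c + K ≠ 0)
    (d7 : x + 1 + e - 1 - K ≠ 0) :
    (c + K) * (K + 1) * (U * (1 / (2 * (x + c + K)) + 1 / (2 * (x + e - K)))) -
      (K + 1 - e) * (c + K - e) *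
        (U * (1 / (2 * (x + c + K + 1)) + 1 / (2 * (x + e - K - 1)))) =
      U * ((x + c + e) * (x + e + 1)) / ((x + c) * (x + 1)) * (x + 1) * (x + 1 + c - 1) *
          (c + 2 * K + 1 - e) / (2 * (x + 1 + c + K) * (x + 1 + e - 1 - K)) -
        U * x * (x + c - 1) * (c + 2 * K + 1 - e) / (2 * (x + c + K) * (x + e - 1 - K)) := by
  field_simp
  ring

section
variable {d : ℕ} {s : ℝ}

lemma lemB (hd : 1 ≤ d) (h1 : (d : ℝ) - 2 < s) (h2 : s < d) (hs : s ≠ 0) (n : ℕ) :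
    ff s d 0 n = TT s d (n + 1) - TT s d n := by
  have hd1 : (1 : ℝ) ≤ d := by exact_mod_cast hd
  have hn0 : (0 : ℝ) ≤ n := Nat.cast_nonneg n
  have hx1 : (n : ℝ) + 1 ≠ 0 := by positivity
  have hxc : (n : ℝ) + (d : ℝ) / 2 ≠ 0 := by positivity
  have hxe : (n : ℝ) + (s - d) / 2 ≠ 0 := by
    intro h; exact key_ne h1 h2 (n : ℤ) (by push_cast; linarith)
  have hxe1 : (n : ℝ) + 1 + (s - d) / 2 ≠ 0 := by
    intro h; exact key_ne h1 h2 ((n : ℤ) + 1) (by push_cast; linarith)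
  have he : (s - (d : ℝ)) / 2 ≠ 0 := by
    intro h; have : s = (d : ℝ) := by linarith
    simp [this] at h2
  have h := algB (uu s d n) (n : ℝ) ((d : ℝ) / 2) ((s - d) / 2) hx1 hxc hxe hxe1 he
  unfold ff TT
  rw [u_rec hd h1 hs n]
  push_cast
  ring_nf
  ring_nf at h
  convert h using 2 <;> ring

set_option maxHeartbeats 2000000 in
lemma lemZ (hd : 1 ≤ d) (h1 : (d : ℝ) - 2 < s) (h2 : s < d) (hs : s ≠ 0) (k n : ℕ) :
    ((d : ℝ) / 2 + k) * ((k : ℝ) + 1) * ff s d k n -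
      ((k : ℝ) + 1 - (s - d) / 2) * ((d : ℝ) / 2 + k - (s - d) / 2) * ff s d (k + 1) n =
    GG s d k (n + 1) - GG s d k n := by
  have hd1 : (1 : ℝ) ≤ d := by exact_mod_cast hd
  have hn0 : (0 : ℝ) ≤ n := Nat.cast_nonneg n
  have hk0 : (0 : ℝ) ≤ k := Nat.cast_nonneg k
  have hx1 : (n : ℝ) + 1 ≠ 0 := by positivity
  have hxc : (n : ℝ) + (d : ℝ) / 2 ≠ 0 := by positivity
  have d1 : (n : ℝ) + (d : ℝ) / 2 + k ≠ 0 := by positivity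
  have d2 : (n : ℝ) + (s - d) / 2 - k ≠ 0 := by
    intro h; exact key_ne h1 h2 ((n : ℤ) - k) (by push_cast; linarith)
  have d3 : (n : ℝ) + (d : ℝ) / 2 + k + 1 ≠ 0 := by positivity
  have d4 : (n : ℝ) + (s - d) / 2 - k - 1 ≠ 0 := by
    intro h; exact key_ne h1 h2 ((n : ℤ) - k - 1) (by push_cast; linarith)
  have d5 : (n : ℝ) + (s - d) / 2 - 1 - k ≠ 0 := by
    intro h; exact key_ne h1 h2 ((n : ℤ) - 1 - k) (by push_cast; linarith)
  have d6 : (n : ℝ) + 1 + (d : ℝ) / 2 + k ≠ 0 := by positivity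
  have d7 : (n : ℝ) + 1 + (s - d) / 2 - 1 - k ≠ 0 := by
    intro h; exact key_ne h1 h2 ((n : ℤ) - k) (by push_cast; linarith)
  have h := algZ (uu s d n) (n : ℝ) ((d : ℝ) / 2) ((s - d) / 2) (k : ℝ)
    hx1 hxc d1 d2 d3 d4 d5 d6 d7
  unfold ff GG
  rw [u_rec hd h1 hs n]
  push_cast
  ring_nf
  ring_nf at h
  convert h using 2 <;> ring

end

lemma gamma_prod (x : ℝ) (hx : ∀ j : ℕ, x + j ≠ 0) (n : ℕ) :
    Real.Gamma (x + n + 1) = Real.Gamma x * ∏ j ∈ Finset.range (n + 1), (x + j) := by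
  induction n with
  | zero =>
      rw [show x + ((0 : ℕ) : ℝ) + 1 = x + 1 by push_cast; ring,
        Real.Gamma_add_one (by simpa using hx 0)]
      simp [Finset.prod_range_one]
      ring
  | succ n ih =>
      have hne : x + (n : ℝ) + 1 ≠ 0 := by
        intro h0; apply hx (n + 1); push_cast; linarith
      rw [show x + ((n + 1 : ℕ) : ℝ) + 1 = (x + n + 1) + 1 by push_cast; ring,
        Real.Gamma_add_one hne, Finset.prod_range_succ _ (n + 1), ih]
      push_cast
      ring

lemma aux_alg (Ga Gb Gc Xa Xb Xc X1 Xsd F Pa Pb Pc P1 : ℝ)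
    (hGc : Gc ≠ 0) (hPa : Pa ≠ 0) (hPb : Pb ≠ 0) (hPc : Pc ≠ 0) (hP1 : P1 ≠ 0)
    (hXa : Xa ≠ 0) (hXb : Xb ≠ 0) (hF : F ≠ 0) (hE : Xc * X1 * Xsd = Xa * Xb) :
    Ga * Pa * (Gb * Pb) / (Gc * Pc * P1) =
      Ga * Gb / Gc * (Xc * F / Pc * (X1 * F / P1) / (Xa * F / Pa * (Xb * F / Pb))) * Xsd := by
  have h : Ga * Gb / Gc * (Xc * F / Pc * (X1 * F / P1) / (Xa * F / Pa * (Xb * F / Pb))) * Xsd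
      = Ga * Gb / Gc * (Xc * X1 * Xsd / (Xa * Xb)) * (Pa * Pb / (Pc * P1)) := by
    field_simp
  rw [h, hE, div_self (mul_ne_zero hXa hXb), mul_one]
  field_simp

section
variable {d : ℕ} {s : ℝ}

lemma hA_all (hd : 1 ≤ d) (h1 : (d : ℝ) - 2 < s) (hs : s ≠ 0) :
    ∀ j : ℕ, s / 2 + (j : ℝ) ≠ 0 := by
  have hd1 : (1 : ℝ) ≤ d := by exact_mod_cast hd
  intro j
  cases j with
  | zero => simpa using fun h => hs (by linarith)
  | succ m =>
      have : (0 : ℝ) ≤ m := Nat.cast_nonneg m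
      push_cast
      intro h; nlinarith

lemma u_seq (hd : 1 ≤ d) (h1 : (d : ℝ) - 2 < s) (h2 : s < d) (hs : s ≠ 0)
    (n : ℕ) (hn : 1 ≤ n) :
    uu s d (n + 1) =
      Real.Gamma (s / 2) * Real.Gamma ((s - d) / 2 + 1) / Real.Gamma ((d : ℝ) / 2) *
        (Real.GammaSeq ((d : ℝ) / 2) n * Real.GammaSeq 1 n /
          (Real.GammaSeq (s / 2) n * Real.GammaSeq ((s - d) / 2 + 1) n)) *
        (n : ℝ) ^ (s - (d : ℝ)) := by
  have hd1 : (1 : ℝ) ≤ d := by exact_mod_cast hd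
  have hn0 : (0 : ℝ) < n := by exact_mod_cast hn
  have hA := hA_all hd h1 hs
  have hB : ∀ j : ℕ, (s - d) / 2 + 1 + (j : ℝ) ≠ 0 := by
    intro j
    have hj : (0 : ℝ) ≤ j := Nat.cast_nonneg j
    intro h; nlinarith
  have hC : ∀ j : ℕ, (d : ℝ) / 2 + (j : ℝ) ≠ 0 := by
    intro j
    have hj : (0 : ℝ) ≤ j := Nat.cast_nonneg j
    intro h; nlinarith
  have hfac : (((n + 1).factorial : ℕ) : ℝ) = ∏ j ∈ Finset.range (n + 1), (1 + (j : ℝ)) := by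
    rw [← Finset.prod_range_add_one_eq_factorial (n + 1)]
    push_cast
    exact Finset.prod_congr rfl fun i _ => by ring
  have hE : (n : ℝ) ^ ((d : ℝ) / 2) * (n : ℝ) ^ (1 : ℝ) * (n : ℝ) ^ (s - (d : ℝ)) =
      (n : ℝ) ^ (s / 2) * (n : ℝ) ^ ((s - d) / 2 + 1) := by
    rw [← Real.rpow_add hn0, ← Real.rpow_add hn0, ← Real.rpow_add hn0]
    congr 1
    ring
  have hPa : (∏ j ∈ Finset.range (n + 1), (s / 2 + (j : ℝ))) ≠ 0 :=
    Finset.prod_ne_zero_iff.2 fun j _ => hA j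
  have hPb : (∏ j ∈ Finset.range (n + 1), ((s - d) / 2 + 1 + (j : ℝ))) ≠ 0 :=
    Finset.prod_ne_zero_iff.2 fun j _ => hB j
  have hPc : (∏ j ∈ Finset.range (n + 1), ((d : ℝ) / 2 + (j : ℝ))) ≠ 0 :=
    Finset.prod_ne_zero_iff.2 fun j _ => hC j
  have hP1 : (∏ j ∈ Finset.range (n + 1), (1 + (j : ℝ))) ≠ 0 :=
    Finset.prod_ne_zero_iff.2 fun j _ => by positivity
  have hXa : (n : ℝ) ^ (s / 2) ≠ 0 := (Real.rpow_pos_of_pos hn0 _).ne'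
  have hXb : (n : ℝ) ^ ((s - d) / 2 + 1) ≠ 0 := (Real.rpow_pos_of_pos hn0 _).ne'
  have hF : ((n.factorial : ℕ) : ℝ) ≠ 0 := by exact_mod_cast n.factorial_ne_zero
  have hGc : Real.Gamma ((d : ℝ) / 2) ≠ 0 := (Real.Gamma_pos_of_pos (by linarith)).ne'
  unfold uu
  rw [show s / 2 + ((n + 1 : ℕ) : ℝ) = s / 2 + (n : ℝ) + 1 by push_cast; ring,
    show (s - d) / 2 + ((n + 1 : ℕ) : ℝ) + 1 = ((s - d) / 2 + 1) + (n : ℝ) + 1 by push_cast; ring,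
    show (d : ℝ) / 2 + ((n + 1 : ℕ) : ℝ) = (d : ℝ) / 2 + (n : ℝ) + 1 by push_cast; ring,
    gamma_prod (s / 2) hA n, gamma_prod ((s - d) / 2 + 1) hB n, gamma_prod ((d : ℝ) / 2) hC n,
    hfac]
  simp only [Real.GammaSeq]
  exact aux_alg _ _ _ _ _ _ _ _ _ _ _ _ _ hGc hPa hPb hPc hP1 hXa hXb hF hE

lemma tendsto_u (hd : 1 ≤ d) (h1 : (d : ℝ) - 2 < s) (h2 : s < d) (hs : s ≠ 0) :
    Tendsto (fun n : ℕ => uu s d n) atTop (𝓝 0) := by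
  have hd1 : (1 : ℝ) ≤ d := by exact_mod_cast hd
  have hGa_ne : Real.Gamma (s / 2) ≠ 0 := by
    apply Real.Gamma_ne_zero
    intro m h
    cases m with
    | zero => exact hs (by push_cast at h; linarith)
    | succ j =>
        have : (0 : ℝ) ≤ j := Nat.cast_nonneg j
        push_cast at h
        nlinarith
  have hGb_ne : Real.Gamma ((s - d) / 2 + 1) ≠ 0 :=
    (Real.Gamma_pos_of_pos (by linarith)).ne'
  have hrp : Tendsto (fun n : ℕ => (n : ℝ) ^ (s - (d : ℝ))) atTop (𝓝 0) := by
    have h := (tendsto_rpow_neg_atTop (y := (d : ℝ) - s) (by linarith)).comp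
      tendsto_natCast_atTop_atTop
    simpa [neg_sub, Function.comp_def] using h
  have hmain : Tendsto (fun n : ℕ =>
      Real.Gamma (s / 2) * Real.Gamma ((s - d) / 2 + 1) / Real.Gamma ((d : ℝ) / 2) *
        (Real.GammaSeq ((d : ℝ) / 2) n * Real.GammaSeq 1 n /
          (Real.GammaSeq (s / 2) n * Real.GammaSeq ((s - d) / 2 + 1) n)) *
        (n : ℝ) ^ (s - (d : ℝ))) atTop (𝓝 0) := by
    have h := (tendsto_const_nhds (x := Real.Gamma (s / 2) * Real.Gamma ((s - d) / 2 + 1) /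
        Real.Gamma ((d : ℝ) / 2)) (f := atTop (α := ℕ))).mul
      (((Real.GammaSeq_tendsto_Gamma ((d : ℝ) / 2)).mul
          (Real.GammaSeq_tendsto_Gamma 1)).div
        ((Real.GammaSeq_tendsto_Gamma (s / 2)).mul
          (Real.GammaSeq_tendsto_Gamma ((s - d) / 2 + 1)))
        (mul_ne_zero hGa_ne hGb_ne))
    simpa using h.mul hrp
  have h0 : Tendsto (fun n : ℕ => uu s d (n + 1)) atTop (𝓝 0) := by
    apply Tendsto.congr' _ hmain
    filter_upwards [eventually_ge_atTop 1] with n hn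
    exact (u_seq hd h1 h2 hs n hn).symm
  exact (Filter.tendsto_add_atTop_iff_nat 1).mp h0
end


section
variable {d : ℕ} {s : ℝ}

lemma rat_tendsto (p q : ℝ) :
    Tendsto (fun n : ℕ => ((n : ℝ) + p) / ((n : ℝ) + q)) atTop (𝓝 1) := by
  have hp := tendsto_const_div_atTop_nhds_zero_nat p
  have hq := tendsto_const_div_atTop_nhds_zero_nat q
  have h : Tendsto (fun n : ℕ => (1 + p / n) / (1 + q / n)) atTop (𝓝 1) := by
    have := ((tendsto_const_nhds (x := (1 : ℝ)) (f := atTop (α := ℕ))).add hp).div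
      ((tendsto_const_nhds (x := (1 : ℝ))).add hq) (by norm_num)
    simpa using (show Tendsto (fun n : ℕ => (1 + p / n) / (1 + q / n)) atTop
      (𝓝 (((1 : ℝ) + 0) / (1 + 0))) from this)
  apply h.congr'
  filter_upwards [eventually_ge_atTop 1] with n hn
  have hn0 : (n : ℝ) ≠ 0 := by positivity
  rw [show (1 : ℝ) + p / n = ((n : ℝ) + p) / n by field_simp,
    show (1 : ℝ) + q / n = ((n : ℝ) + q) / n by field_simp,
    div_div_div_comm, div_self hn0, div_one]

lemma tendsto_TT (hd : 1 ≤ d) (h1 : (d : ℝ) - 2 < s) (h2 : s < d) (hs : s ≠ 0) :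
    Tendsto (fun n : ℕ => TT s d n) atTop (𝓝 0) := by
  have h := (tendsto_u hd h1 h2 hs).mul
    ((rat_tendsto 0 ((s - d) / 2)).mul (tendsto_const_nhds (x := (s - (d : ℝ))⁻¹)))
  rw [zero_mul] at h
  apply h.congr
  intro n
  have hne1 : s - (d : ℝ) ≠ 0 := by intro h0; linarith [sub_eq_zero.mp h0]
  have hne2 : (n : ℝ) + (s - d) / 2 ≠ 0 := by
    intro h0; exact key_ne h1 h2 (n : ℤ) (by push_cast; linarith)
  show uu s d n * (((n : ℝ) + 0) / ((n : ℝ) + (s - d) / 2) * (s - (d : ℝ))⁻¹) = TT s d n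
  unfold TT
  field_simp
  ring

lemma tendsto_GG (hd : 1 ≤ d) (h1 : (d : ℝ) - 2 < s) (h2 : s < d) (hs : s ≠ 0) (k : ℕ) :
    Tendsto (fun n : ℕ => GG s d k n) atTop (𝓝 0) := by
  have h := (tendsto_u hd h1 h2 hs).mul
    (((rat_tendsto 0 ((d : ℝ) / 2 + k)).mul
        (rat_tendsto ((d : ℝ) / 2 - 1) ((s - d) / 2 - 1 - k))).mul
      (tendsto_const_nhds (x := ((d : ℝ) + 2 * k + 1 - s / 2) / 2)))
  rw [zero_mul] at h
  apply h.congr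
  intro n
  have hd1 : (1 : ℝ) ≤ d := by exact_mod_cast hd
  have hn0 : (0 : ℝ) ≤ n := Nat.cast_nonneg n
  have hk0 : (0 : ℝ) ≤ k := Nat.cast_nonneg k
  have hne1 : (n : ℝ) + ((d : ℝ) / 2 + k) ≠ 0 := by positivity
  have hne2 : (n : ℝ) + ((s - d) / 2 - 1 - k) ≠ 0 := by
    intro h0; exact key_ne h1 h2 ((n : ℤ) - 1 - k) (by push_cast; linarith)
  show uu s d n * ((((n : ℝ) + 0) / ((n : ℝ) + ((d : ℝ) / 2 + k)) *
      (((n : ℝ) + ((d : ℝ) / 2 - 1)) / ((n : ℝ) + ((s - d) / 2 - 1 - k)))) *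
      (((d : ℝ) + 2 * k + 1 - s / 2) / 2)) = GG s d k n
  unfold GG
  field_simp
  ring

lemma sumB (hd : 1 ≤ d) (h1 : (d : ℝ) - 2 < s) (h2 : s < d) (hs : s ≠ 0) (N : ℕ) :
    ∑ n ∈ Finset.range N, ff s d 0 n = TT s d N := by
  induction N with
  | zero => simp [TT]
  | succ N ih =>
      rw [Finset.sum_range_succ, ih]
      linear_combination lemB hd h1 h2 hs N

lemma sumZ (hd : 1 ≤ d) (h1 : (d : ℝ) - 2 < s) (h2 : s < d) (hs : s ≠ 0) (k N : ℕ) :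
    ((d : ℝ) / 2 + k) * ((k : ℝ) + 1) * ∑ n ∈ Finset.range N, ff s d k n -
      ((k : ℝ) + 1 - (s - d) / 2) * ((d : ℝ) / 2 + k - (s - d) / 2) *
        ∑ n ∈ Finset.range N, ff s d (k + 1) n = GG s d k N := by
  induction N with
  | zero => simp [GG]
  | succ N ih =>
      rw [Finset.sum_range_succ, Finset.sum_range_succ]
      linear_combination ih + lemZ hd h1 h2 hs k N

end

section
variable {d : ℕ} {s : ℝ}

lemma u_pos (hd : 1 ≤ d) (h1 : (d : ℝ) - 2 < s) (n : ℕ) (hn : 1 ≤ n) :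
    0 < uu s d n := by
  have hd1 : (1 : ℝ) ≤ d := by exact_mod_cast hd
  have hn1 : (1 : ℝ) ≤ n := by exact_mod_cast hn
  unfold uu
  have g1 : 0 < Real.Gamma (s / 2 + n) := Real.Gamma_pos_of_pos (by linarith)
  have g2 : 0 < Real.Gamma ((s - d) / 2 + n + 1) := Real.Gamma_pos_of_pos (by linarith)
  have g3 : 0 < Real.Gamma ((d : ℝ) / 2 + n) := Real.Gamma_pos_of_pos (by linarith)
  have g4 : (0 : ℝ) < n.factorial := by exact_mod_cast n.factorial_pos
  positivity

lemma ff_nonneg (hd : 1 ≤ d) (h1 : (d : ℝ) - 2 < s) (k n : ℕ) (hn : (k : ℝ) + 1 ≤ n) :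
    0 ≤ ff s d k n := by
  have hd1 : (1 : ℝ) ≤ d := by exact_mod_cast hd
  have hk0 : (0 : ℝ) ≤ k := Nat.cast_nonneg k
  have hn1 : 1 ≤ n := by
    have hx : (1 : ℝ) ≤ n := by linarith
    exact_mod_cast hx
  have hu := u_pos hd h1 n hn1
  have e1 : (0 : ℝ) < 2 * (n : ℝ) + 2 * k + d := by linarith
  have e2 : (0 : ℝ) < 2 * (n : ℝ) - 2 * k + s - d := by linarith
  unfold ff
  positivity

lemma TT_nonpos (hd : 1 ≤ d) (h1 : (d : ℝ) - 2 < s) (h2 : s < d) (n : ℕ) :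
    TT s d n ≤ 0 := by
  cases n with
  | zero => simp [TT]
  | succ m =>
      have hd1 : (1 : ℝ) ≤ d := by exact_mod_cast hd
      have hm0 : (0 : ℝ) ≤ m := Nat.cast_nonneg m
      have hn1 : (1 : ℝ) ≤ ((m + 1 : ℕ) : ℝ) := by push_cast; linarith
      have hu := u_pos hd h1 (m + 1) (by omega)
      unfold TT
      apply div_nonpos_of_nonneg_of_nonpos
      · have : (0 : ℝ) ≤ ((m + 1 : ℕ) : ℝ) := by linarith
        positivity
      · push_cast
        nlinarith

lemma summable_f0shift (hd : 1 ≤ d) (h1 : (d : ℝ) - 2 < s) (h2 : s < d) (hs : s ≠ 0) :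
    Summable (fun n : ℕ => ff s d 0 (n + 1)) := by
  apply summable_of_sum_range_le (c := -ff s d 0 0)
  · intro n
    apply ff_nonneg hd h1 0 (n + 1)
    push_cast
    linarith [Nat.cast_nonneg (α := ℝ) n]
  · intro N
    have h := sumB hd h1 h2 hs (N + 1)
    rw [Finset.sum_range_succ'] at h
    have := TT_nonpos hd h1 h2 (N + 1)
    linarith

lemma bnd_aux (u a b c e : ℝ) (hu : 0 < u) (hb : 0 < b) (hc : 0 < c) (he : 0 < e)
    (h1 : 1 / a ≤ 1 / c) (h2 : 1 / b ≤ 2 * (1 / e)) :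
    u * (1 / a + 1 / b) ≤ 2 * (u * (1 / c + 1 / e)) := by
  have h3 := mul_le_mul_of_nonneg_left (add_le_add h1 h2) hu.le
  nlinarith [mul_pos hu (one_div_pos.2 hc)]

lemma summable_absf (hd : 1 ≤ d) (h1 : (d : ℝ) - 2 < s) (h2 : s < d) (hs : s ≠ 0) (k : ℕ) :
    Summable (fun n : ℕ => |ff s d k n|) := by
  have hd1 : (1 : ℝ) ≤ d := by exact_mod_cast hd
  rw [← summable_nat_add_iff (2 * k + 2)]
  have base : Summable (fun n : ℕ => ff s d 0 (n + (2 * k + 2))) := by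
    have h := (summable_nat_add_iff (2 * k + 1)).mpr (summable_f0shift hd h1 h2 hs)
    exact h.congr fun n => by rw [show n + (2 * k + 1) + 1 = n + (2 * k + 2) from by omega]
  apply Summable.of_nonneg_of_le (fun n => abs_nonneg _) _ (base.mul_left 2)
  intro n
  set m := n + (2 * k + 2) with hm
  have hk0 : (0 : ℝ) ≤ k := Nat.cast_nonneg k
  have hmk : 2 * (k : ℝ) + 2 ≤ (m : ℝ) := by
    rw [hm]; push_cast; linarith [Nat.cast_nonneg (α := ℝ) n]
  have hm1 : 1 ≤ m := by omega
  have hu := u_pos hd h1 m hm1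
  have hD2 : (0 : ℝ) < 2 * (m : ℝ) - 2 * k + s - d := by linarith
  have hE1 : (0 : ℝ) < 2 * (m : ℝ) + 2 * ((0 : ℕ) : ℝ) + d := by push_cast; linarith
  have hE2 : (0 : ℝ) < 2 * (m : ℝ) - 2 * ((0 : ℕ) : ℝ) + s - d := by push_cast; linarith
  have habs : |ff s d k m| = ff s d k m :=
    abs_of_nonneg (ff_nonneg hd h1 k m (by linarith))
  rw [habs]
  unfold ff
  apply bnd_aux _ _ _ _ _ hu hD2 hE1 hE2
  · exact one_div_le_one_div_of_le hE1 (by push_cast; linarith)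
  · rw [mul_one_div, div_le_div_iff₀ hD2 hE2]
    push_cast
    nlinarith

end

section
variable {d : ℕ} {s : ℝ}

lemma tsum_ff_eq_zero (hd : 1 ≤ d) (h1 : (d : ℝ) - 2 < s) (h2 : s < d) (hs : s ≠ 0) (k : ℕ) :
    ∑' n : ℕ, ff s d k n = 0 := by
  have hsum : ∀ k : ℕ, Summable (ff s d k) := fun k => (summable_absf hd h1 h2 hs k).of_abs
  induction k with
  | zero =>
      refine tendsto_nhds_unique (hsum 0).hasSum.tendsto_sum_nat ?_
      exact (tendsto_TT hd h1 h2 hs).congr fun N => (sumB hd h1 h2 hs N).symm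
  | succ k ih =>
      have hA := ((hsum k).hasSum.tendsto_sum_nat.const_mul
          (((d : ℝ) / 2 + k) * ((k : ℝ) + 1))).sub
        ((hsum (k + 1)).hasSum.tendsto_sum_nat.const_mul
          (((k : ℝ) + 1 - (s - d) / 2) * ((d : ℝ) / 2 + k - (s - d) / 2)))
      have hB : Tendsto (fun N : ℕ =>
          ((d : ℝ) / 2 + k) * ((k : ℝ) + 1) * ∑ n ∈ Finset.range N, ff s d k n -
            ((k : ℝ) + 1 - (s - d) / 2) * ((d : ℝ) / 2 + k - (s - d) / 2) *
              ∑ n ∈ Finset.range N, ff s d (k + 1) n) atTop (𝓝 0) :=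
        (tendsto_GG hd h1 h2 hs k).congr fun N => (sumZ hd h1 h2 hs k N).symm
      have heq := tendsto_nhds_unique hA hB
      rw [ih, mul_zero, zero_sub, neg_eq_zero] at heq
      have hd1 : (1 : ℝ) ≤ d := by exact_mod_cast hd
      have hk0 : (0 : ℝ) ≤ k := Nat.cast_nonneg k
      have hc1 : ((k : ℝ) + 1 - (s - d) / 2) * ((d : ℝ) / 2 + k - (s - d) / 2) ≠ 0 := by
        have e1 : (0 : ℝ) < (k : ℝ) + 1 - (s - d) / 2 := by linarith
        have e2 : (0 : ℝ) < (d : ℝ) / 2 + k - (s - d) / 2 := by linarith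
        positivity
      rcases mul_eq_zero.mp heq with h | h
      · exact absurd h hc1
      · exact h

end

/-- For `d ≥ 1`, `d − 2 < s < d`, `s ≠ 0` and any integer `k ≥ 0`,
all denominators `2n − 2k + s − d` are nonzero, the series converges absolutely,
and the sum vanishes. -/
theorem stmt0 (d : ℕ) (hd : 1 ≤ d) (s : ℝ) (h1 : (d : ℝ) - 2 < s) (h2 : s < d)
    (hs : s ≠ 0) (k : ℕ) :
    (∀ n : ℕ, 2 * (n : ℝ) - 2 * (k : ℝ) + s - (d : ℝ) ≠ 0) ∧
    Summable (fun n : ℕ =>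
      |Real.Gamma (s / 2 + n) * Real.Gamma ((s - d) / 2 + n + 1) /
          (Real.Gamma ((d : ℝ) / 2 + n) * (n.factorial : ℝ)) *
        (1 / (2 * (n : ℝ) + 2 * (k : ℝ) + d) + 1 / (2 * (n : ℝ) - 2 * (k : ℝ) + s - d))|) ∧
    ∑' n : ℕ, Real.Gamma (s / 2 + n) * Real.Gamma ((s - d) / 2 + n + 1) /
          (Real.Gamma ((d : ℝ) / 2 + n) * (n.factorial : ℝ)) *
        (1 / (2 * (n : ℝ) + 2 * (k : ℝ) + d) + 1 / (2 * (n : ℝ) - 2 * (k : ℝ) + s - d))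
      = 0 := by
  refine ⟨fun n h => key_ne h1 h2 ((n : ℤ) - k) (by push_cast; linarith), ?_, ?_⟩
  · exact summable_absf hd h1 h2 hs k
  · exact tsum_ff_eq_zero hd h1 h2 hs k
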